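/- Let x be a maximal fractional path flow. Define gamma_i = sum_{p in P_i} x_{i,p} and y_v = (sum over paths through v of flow) / C_v. Then (y, gamma) is a feasible solution to the dual LP, and sum_v y_v C_v + sum_i gamma_i <= (d+1) * (value of x), where d bounds the number of capacitated vertices on any path. -/
import Mathlib


open Finset

/-- For a maximal fractional path flow `x`, the dual solution given by
`γ i = ` matched fraction of source `i` and `y v = load(v)/C v` is feasible for the
dual LP, and its value is at most `(d+1)` times the value of `x`. -/
theorem maximal_flow_dual_solution
    {ι V P : Type*} [Fintype ι] [Fintype V] [Fintype P] [DecidableEq ι] [DecidableEq V]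
    (src : P → ι) (thru : P → Finset V) (C : V → ℝ) (d : ℕ)
    (hC : ∀ v, 0 < C v)
    (hd : ∀ p : P, (thru p).card ≤ d)
    (x : P → ℝ) (hx : ∀ p, 0 ≤ x p)
    (hsrc : ∀ i : ι, ∑ p ∈ univ.filter (fun p => src p = i), x p ≤ 1)
    (hcap : ∀ v : V, ∑ p ∈ univ.filter (fun p => v ∈ thru p), x p ≤ C v)
    (hmax : ∀ p : P, ∑ q ∈ univ.filter (fun q => src q = src p), x q < 1 →
      ∃ v ∈ thru p, ∑ q ∈ univ.filter (fun q => v ∈ thru q), x q = C v) :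
    (∀ p : P,
        1 ≤ (∑ v ∈ thru p, (∑ q ∈ univ.filter (fun q => v ∈ thru q), x q) / C v) +
            ∑ q ∈ univ.filter (fun q => src q = src p), x q) ∧
    (∑ v, ((∑ q ∈ univ.filter (fun q => v ∈ thru q), x q) / C v) * C v +
        ∑ i, ∑ p ∈ univ.filter (fun p => src p = i), x p) ≤ (d + 1 : ℝ) * ∑ p, x p := by

  have hload : ∀ v, (0:ℝ) ≤ ∑ q ∈ univ.filter (fun q => v ∈ thru q), x q :=
    fun v => Finset.sum_nonneg fun q _ => hx q
  have hγ : ∀ p : P, (0:ℝ) ≤ ∑ q ∈ univ.filter (fun q => src q = src p), x q :=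
    fun p => Finset.sum_nonneg fun q _ => hx q
  constructor
  · intro p
    by_cases h : ∑ q ∈ univ.filter (fun q => src q = src p), x q < 1
    · obtain ⟨v, hv, hveq⟩ := hmax p h
      have h1 : (1:ℝ) ≤ ∑ v ∈ thru p, (∑ q ∈ univ.filter (fun q => v ∈ thru q), x q) / C v := by
        have heq : (∑ q ∈ univ.filter (fun q => v ∈ thru q), x q) / C v = 1 := by
          rw [hveq]; exact div_self (hC v).ne'
        calc (1:ℝ) = (∑ q ∈ univ.filter (fun q => v ∈ thru q), x q) / C v := heq.symm
          _ ≤ _ := Finset.single_le_sum (fun w _ => div_nonneg (hload w) (hC w).le) hv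
      linarith [hγ p]
    · push_neg at h
      have h0 : (0:ℝ) ≤ ∑ v ∈ thru p, (∑ q ∈ univ.filter (fun q => v ∈ thru q), x q) / C v :=
        Finset.sum_nonneg fun w _ => div_nonneg (hload w) (hC w).le
      linarith
  · have e1 : ∑ v, ((∑ q ∈ univ.filter (fun q => v ∈ thru q), x q) / C v) * C v
        = ∑ v, ∑ q ∈ univ.filter (fun q => v ∈ thru q), x q :=
      Finset.sum_congr rfl fun v _ => div_mul_cancel₀ _ (hC v).ne'
    have e2 : ∑ v, ∑ q ∈ univ.filter (fun q => v ∈ thru q), x q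
        = ∑ p, ((thru p).card : ℝ) * x p := by
      simp_rw [Finset.sum_filter]
      rw [Finset.sum_comm]
      refine Finset.sum_congr rfl fun p _ => ?_
      rw [Finset.sum_ite_mem, Finset.univ_inter, Finset.sum_const, nsmul_eq_mul]
    have e3 : ∑ i, ∑ p ∈ univ.filter (fun p => src p = i), x p = ∑ p, x p := by
      rw [Finset.sum_fiberwise]
    have e4 : ∑ p, ((thru p).card : ℝ) * x p ≤ (d:ℝ) * ∑ p, x p := by
      rw [Finset.mul_sum]
      exact Finset.sum_le_sum fun p _ => mul_le_mul_of_nonneg_right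
        (by exact_mod_cast hd p) (hx p)
    rw [e1, e2, e3]
    nlinarith [e4]
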